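/- Let A > 0, set p = −4·A⁴/3, and define ψ : ℝ × ℝ → ℝ by ψ(t,x) = A·(sech(x − p·t))^{1/2} (real power of the positive number sech(x − p·t)). Then ψ satisfies the flow equation ∂_t(−ψ_{xx}/ψ) = ∂_x(ψ⁴) at every point (t,x) ∈ ℝ²; equivalently, ∂_x(ψ⁴) + ∂_t(ψ_{xx}/ψ) = 0. Hence this equation admits the solitonic solution A·sech^{1/2}(x − p·t) with speed of propagation p = −4·A⁴/3. -/

import Mathlib

/-- Partial derivative in the second (space) variable. -/
noncomputable def pdx (u : ℝ → ℝ → ℝ) : ℝ → ℝ → ℝ :=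
  fun t x => deriv (fun y => u t y) x

/-- Partial derivative in the first (time) variable. -/
noncomputable def pdt (u : ℝ → ℝ → ℝ) : ℝ → ℝ → ℝ :=
  fun t x => deriv (fun s => u s x) t

lemma HasDerivAt.congr_val {f : ℝ → ℝ} {a b x : ℝ} (h : HasDerivAt f a x) (hab : a = b) :
    HasDerivAt f b x := hab ▸ h

/-- derivative of sech^{1/2} -/
lemma hasDerivAt_S (y : ℝ) :
    HasDerivAt (fun y => (1 / Real.cosh y) ^ ((1:ℝ)/2))
      (-(1/2) * (1 / Real.cosh y) ^ ((1:ℝ)/2) * (Real.sinh y / Real.cosh y)) y := by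
  have hc : (0:ℝ) < Real.cosh y := Real.cosh_pos y
  have h1 : HasDerivAt (fun y => 1 / Real.cosh y)
      (-Real.sinh y / Real.cosh y ^ 2) y := by
    simpa [one_div, Pi.inv_def] using (Real.hasDerivAt_cosh y).inv (ne_of_gt hc)
  have h2 := h1.rpow_const (p := (1:ℝ)/2) (Or.inl (by positivity))
  refine h2.congr_val ?_
  have key : (1 / Real.cosh y) ^ ((1:ℝ)/2 - 1)
      = (1 / Real.cosh y) ^ ((1:ℝ)/2) * Real.cosh y := by
    rw [Real.rpow_sub (by positivity), Real.rpow_one]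
    field_simp
  rw [key]
  field_simp

/-- second derivative building block -/
lemma hasDerivAt_S' (y : ℝ) :
    HasDerivAt (fun y => -(1/2) * (1 / Real.cosh y) ^ ((1:ℝ)/2) * (Real.sinh y / Real.cosh y))
      ((1 / Real.cosh y) ^ ((1:ℝ)/2) *
        ((Real.sinh y / Real.cosh y) ^ 2 / 4 - (1 / Real.cosh y) ^ 2 / 2)) y := by
  have hc : (0:ℝ) < Real.cosh y := Real.cosh_pos y
  have htanh : HasDerivAt (fun y => Real.sinh y / Real.cosh y) (1 / Real.cosh y ^ 2) y := by
    refine ((Real.hasDerivAt_sinh y).div (Real.hasDerivAt_cosh y) (ne_of_gt hc)).congr_val ?_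
    have h := Real.cosh_sq_sub_sinh_sq y
    field_simp
    nlinarith [Real.cosh_sq_sub_sinh_sq y]
  have hS := (hasDerivAt_S y).const_mul (-(1/2) : ℝ)
  refine HasDerivAt.congr_val (hS.mul htanh) ?_
  first | (field_simp; ring) | field_simp | ring

theorem stmt_10 (A p : ℝ) (hA : 0 < A) (hp : p = -4 * A ^ 4 / 3)
    (ψ : ℝ → ℝ → ℝ)
    (hψ : ψ = fun t x => A * (1 / Real.cosh (x - p * t)) ^ ((1 : ℝ) / 2)) :
    ∀ t x : ℝ,
      pdt (fun t x => -(pdx (pdx ψ) t x) / ψ t x) t x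
        = pdx (fun t x => (ψ t x) ^ 4) t x := by
  intro t x
  -- first spatial derivative
  have hpdx : pdx ψ = fun t x => A * (-(1/2) * (1 / Real.cosh (x - p * t)) ^ ((1:ℝ)/2) *
      (Real.sinh (x - p * t) / Real.cosh (x - p * t))) := by
    funext t x
    simp only [pdx, hψ]
    have hu : HasDerivAt (fun y : ℝ => y - p * t) 1 x := by
      simpa using (hasDerivAt_id x).sub_const (p * t)
    have h : HasDerivAt (fun y : ℝ => A * (1 / Real.cosh (y - p * t)) ^ ((1:ℝ)/2))
        (A * (-(1/2) * (1 / Real.cosh (x - p * t)) ^ ((1:ℝ)/2) *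
          (Real.sinh (x - p * t) / Real.cosh (x - p * t)))) x := by
      refine (((hasDerivAt_S (x - p * t)).comp x hu).const_mul A).congr_val ?_
      ring
    rw [h.deriv]
  -- second spatial derivative
  have hpdx2 : pdx (pdx ψ) = fun t x => A * ((1 / Real.cosh (x - p * t)) ^ ((1:ℝ)/2) *
      ((Real.sinh (x - p * t) / Real.cosh (x - p * t)) ^ 2 / 4
        - (1 / Real.cosh (x - p * t)) ^ 2 / 2)) := by
    funext t x
    rw [show pdx (pdx ψ) t x = deriv (fun y => pdx ψ t y) x from rfl]
    simp only [hpdx]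
    have hu : HasDerivAt (fun y : ℝ => y - p * t) 1 x := by
      simpa using (hasDerivAt_id x).sub_const (p * t)
    have h : HasDerivAt (fun y : ℝ => A * (-(1/2) * (1 / Real.cosh (y - p * t)) ^ ((1:ℝ)/2) *
        (Real.sinh (y - p * t) / Real.cosh (y - p * t))))
        (A * ((1 / Real.cosh (x - p * t)) ^ ((1:ℝ)/2) *
          ((Real.sinh (x - p * t) / Real.cosh (x - p * t)) ^ 2 / 4
            - (1 / Real.cosh (x - p * t)) ^ 2 / 2))) x := by
      refine (((hasDerivAt_S' (x - p * t)).comp x hu).const_mul A).congr_val ?_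
      ring
    rw [h.deriv]
  -- the ratio simplifies
  have hratio : (fun t x => -(pdx (pdx ψ) t x) / ψ t x)
      = fun t x => (3:ℝ)/4 * (1 / Real.cosh (x - p * t)) ^ 2 - 1/4 := by
    funext t x
    have hc : (0:ℝ) < Real.cosh (x - p * t) := Real.cosh_pos _
    have hSpos : (0:ℝ) < (1 / Real.cosh (x - p * t)) ^ ((1:ℝ)/2) :=
      Real.rpow_pos_of_pos (by positivity) _
    simp only [hpdx2]
    simp only [hψ]
    have htanhsq : (Real.sinh (x - p*t) / Real.cosh (x - p*t)) ^ 2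
        = 1 - (1 / Real.cosh (x - p*t)) ^ 2 := by
      field_simp
      nlinarith [Real.cosh_sq_sub_sinh_sq (x - p*t)]
    rw [htanhsq]
    field_simp
    ring
  -- LHS
  rw [hratio]
  have hc : (0:ℝ) < Real.cosh (x - p * t) := Real.cosh_pos _
  have hu : HasDerivAt (fun s : ℝ => x - p * s) (-p) t := by
    simpa using ((hasDerivAt_id t).const_mul p).const_sub x
  have hinv : HasDerivAt (fun s : ℝ => 1 / Real.cosh (x - p * s))
      (-Real.sinh (x - p * t) / Real.cosh (x - p * t) ^ 2 * (-p)) t := by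
    have h1 : HasDerivAt (fun y : ℝ => 1 / Real.cosh y)
        (-Real.sinh (x - p * t) / Real.cosh (x - p * t) ^ 2) (x - p * t) := by
      simpa [one_div, Pi.inv_def] using (Real.hasDerivAt_cosh (x - p * t)).inv (ne_of_gt hc)
    have := h1.comp t hu; exact this
  have hL : HasDerivAt (fun s : ℝ => (3:ℝ)/4 * (1 / Real.cosh (x - p * s)) ^ 2 - 1/4)
      (3 * p / 2 * (Real.sinh (x - p * t) / Real.cosh (x - p * t) ^ 3)) t := by
    refine (((hinv.pow 2).const_mul ((3:ℝ)/4)).sub_const (1/4 : ℝ)).congr_val ?_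
    try simp only [Function.comp_def]
    push_cast
    first | (field_simp; ring) | field_simp | ring
  have hLval : pdt (fun t x => (3:ℝ)/4 * (1 / Real.cosh (x - p * t)) ^ 2 - 1/4) t x
      = 3 * p / 2 * (Real.sinh (x - p * t) / Real.cosh (x - p * t) ^ 3) := by
    simp only [pdt]
    exact hL.deriv
  rw [hLval]
  -- RHS
  have hψ4 : (fun y : ℝ => (ψ t y) ^ 4) = fun y : ℝ => A ^ 4 / Real.cosh (y - p * t) ^ 2 := by
    funext y
    have hcy : (0:ℝ) < Real.cosh (y - p * t) := Real.cosh_pos _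
    rw [hψ]
    have hkey : ((1 / Real.cosh (y - p * t)) ^ ((1:ℝ)/2)) ^ (4:ℕ)
        = 1 / Real.cosh (y - p * t) ^ 2 := by
      rw [← Real.rpow_natCast ((1 / Real.cosh (y - p * t)) ^ ((1:ℝ)/2)) 4,
        ← Real.rpow_mul (by positivity)]
      norm_num
    calc (A * (1 / Real.cosh (y - p * t)) ^ ((1:ℝ)/2)) ^ 4
        = A ^ 4 * ((1 / Real.cosh (y - p * t)) ^ ((1:ℝ)/2)) ^ (4:ℕ) := by ring
      _ = A ^ 4 / Real.cosh (y - p * t) ^ 2 := by rw [hkey]; ring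
  have hux : HasDerivAt (fun y : ℝ => y - p * t) 1 x := by
    simpa using (hasDerivAt_id x).sub_const (p * t)
  have hR : HasDerivAt (fun y : ℝ => A ^ 4 / Real.cosh (y - p * t) ^ 2)
      (-2 * A ^ 4 * (Real.sinh (x - p * t) / Real.cosh (x - p * t) ^ 3)) x := by
    have hcosh2 : HasDerivAt (fun y : ℝ => Real.cosh (y - p * t) ^ 2)
        (2 * Real.cosh (x - p * t) * Real.sinh (x - p * t)) x := by
      refine (((Real.hasDerivAt_cosh (x - p * t)).comp x hux).pow 2).congr_val ?_
      simp only [Function.comp_def]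
      push_cast
      ring
    have h := (hcosh2.inv (by positivity)).const_mul (A ^ 4)
    have hfn : (fun y : ℝ => A ^ 4 * (Real.cosh (y - p * t) ^ 2)⁻¹)
        = (fun y : ℝ => A ^ 4 / Real.cosh (y - p * t) ^ 2) := by
      funext y; rw [div_eq_mul_inv]
    simp only [Pi.inv_apply] at h
    rw [hfn] at h
    refine h.congr_val ?_
    field_simp
  have hRval : pdx (fun t x => (ψ t x) ^ 4) t x
      = -2 * A ^ 4 * (Real.sinh (x - p * t) / Real.cosh (x - p * t) ^ 3) := by
    simp only [pdx]
    rw [hψ4]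
    exact hR.deriv
  rw [hRval, hp]
  field_simp
  ring
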